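/- arXiv:1605.08339 — 4 statements merged into one kernel-verified Lean document; each statement's English description precedes it below -/
import Mathlib

section
/- If τ is a strong stationary time for a Markov chain with stationary distribution π started from x₀, then the separation distance satisfies s(t) ≤ P(τ > t) for every t ≥ 0, where s(t) = 1 − min over states x of K^t(x₀, x)/π(x). -/
open MeasureTheory
open scoped ENNReal

/-- If `τ` is a strong stationary time for a Markov chain `(X_t)` on a finite state space
with positive stationary distribution `π`, started from a fixed state (so that
`μ {X_t = x} = K^t(x₀,x)`), then the separation distance satisfies
`1 - K^t(x₀,x)/π(x) ≤ P(τ > t)` for every `t` and every state `x`. -/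
theorem sep_le_sst {Ω : Type*} [MeasurableSpace Ω] (μ : Measure Ω) [IsProbabilityMeasure μ]
    {S : Type*} [Fintype S]
    (X : ℕ → Ω → S) (τ : Ω → ℕ∞) (π : S → ℝ≥0∞)
    (hπpos : ∀ x, π x ≠ 0) (hπsum : ∑ x, π x = 1)
    (hsst : ∀ (t : ℕ) (x : S),
      μ {ω | X t ω = x ∧ τ ω ≤ (t : ℕ∞)} = π x * μ {ω | τ ω ≤ (t : ℕ∞)}) :
    ∀ (t : ℕ) (x : S),
      1 - μ {ω | X t ω = x} / π x ≤ μ {ω | (t : ℕ∞) < τ ω} := by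
  intro t x
  have hπtop : π x ≠ ⊤ := by
    intro h
    have hle : π x ≤ 1 := hπsum ▸ Finset.single_le_sum (f := π)
      (fun i _ => zero_le) (Finset.mem_univ x)
    simp [h] at hle
  -- μ {τ ≤ t} ≤ μ {X t = x} / π x
  have h1 : μ {ω | τ ω ≤ (t : ℕ∞)} ≤ μ {ω | X t ω = x} / π x := by
    rw [ENNReal.le_div_iff_mul_le (Or.inl (hπpos x)) (Or.inl hπtop), mul_comm, ← hsst t x]
    exact measure_mono (fun ω hω => hω.1)
  -- 1 ≤ μ {t < τ} + μ {τ ≤ t}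
  have h2 : (1 : ℝ≥0∞) ≤ μ {ω | (t : ℕ∞) < τ ω} + μ {ω | τ ω ≤ (t : ℕ∞)} := by
    have : (Set.univ : Set Ω) ⊆ {ω | (t : ℕ∞) < τ ω} ∪ {ω | τ ω ≤ (t : ℕ∞)} := by
      intro ω _
      exact (lt_or_ge (t : ℕ∞) (τ ω)).imp id id
    calc (1 : ℝ≥0∞) = μ Set.univ := (measure_univ).symm
      _ ≤ μ ({ω | (t : ℕ∞) < τ ω} ∪ {ω | τ ω ≤ (t : ℕ∞)}) := measure_mono this
      _ ≤ _ := measure_union_le _ _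
  calc 1 - μ {ω | X t ω = x} / π x ≤ 1 - μ {ω | τ ω ≤ (t : ℕ∞)} := tsub_le_tsub_left h1 1
    _ ≤ μ {ω | (t : ℕ∞) < τ ω} := tsub_le_iff_right.mpr h2
end

section
/- For the inverse riffle shuffle on n cards, with t = 2·log₂n + c (c ≥ 0), the separation distance satisfies s(t) ≤ (n(n−1)/2)·(1/2)^t ≤ 1/2^{c+1}. -/
open scoped Classical

/-- New position of the card at (old) position `p` after the inverse riffle shuffle that
moves the set of cards `A` to the top of the deck `σ` keeping relative orders. -/
def rifflePos {n : ℕ} (A : Finset (Fin n)) (σ : Equiv.Perm (Fin n)) (p : Fin n) : ℕ :=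
  if σ p ∈ A then (Finset.univ.filter fun p' => p' < p ∧ σ p' ∈ A).card
  else A.card + (Finset.univ.filter fun p' => p' < p ∧ σ p' ∉ A).card

/-- Transition matrix of the inverse riffle shuffle on `n` cards: each subset `A` of the
cards is chosen with probability `2^{-n}` and the cards of `A` are moved to the top,
keeping relative orders.  `τ` is the result of the `A`-shuffle of `σ` iff the card `σ p`
sits at position `rifflePos A σ p` in `τ`. -/
noncomputable def riffleKernel (n : ℕ) :
    Matrix (Equiv.Perm (Fin n)) (Equiv.Perm (Fin n)) ℝ :=
  fun σ τ =>
    ((Finset.univ.filter fun A : Finset (Fin n) =>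
        ∀ p : Fin n, ((τ.symm (σ p) : Fin n) : ℕ) = rifflePos A σ p).card : ℝ) / 2 ^ n

namespace RiffleAux


open Finset Equiv

variable {n : ℕ}

/-- encoding of position `p` w.r.t. marked set `B` that captures post-shuffle order -/
def enc (B : Finset (Fin n)) (p : Fin n) : ℕ := (if p ∈ B then 0 else n) + (p : ℕ)

noncomputable def posFun (B : Finset (Fin n)) (p : Fin n) : ℕ :=
  if p ∈ B then (univ.filter fun p' => p' < p ∧ p' ∈ B).card
  else B.card + (univ.filter fun p' => p' < p ∧ p' ∉ B).card

/-- number of elements of `S` (strictly) before `p` -/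
def cnt (S : Finset (Fin n)) (p : Fin n) : ℕ := (univ.filter fun p' => p' < p ∧ p' ∈ S).card

lemma filter_notmem_eq (B : Finset (Fin n)) (p : Fin n) :
    (univ.filter fun p' => p' < p ∧ p' ∉ B) = (univ.filter fun p' => p' < p ∧ p' ∈ Bᶜ) := by
  apply Finset.filter_congr
  intro a _
  simp

lemma posFun_eq (B : Finset (Fin n)) (p : Fin n) :
    posFun B p = if p ∈ B then cnt B p else B.card + cnt Bᶜ p := by
  unfold posFun cnt
  rw [filter_notmem_eq]

lemma cnt_lt_cnt {S : Finset (Fin n)} {p q : Fin n} (hp : p ∈ S) (hpq : p < q) :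
    cnt S p < cnt S q := by
  apply Finset.card_lt_card
  constructor
  · intro a ha
    simp only [mem_filter, mem_univ, true_and] at ha ⊢
    exact ⟨ha.1.trans hpq, ha.2⟩
  · intro hsub
    have h2 := hsub (by simp [hpq, hp] : p ∈ univ.filter fun p' => p' < q ∧ p' ∈ S)
    simp only [mem_filter, mem_univ, true_and] at h2
    exact absurd h2.1 (lt_irrefl p)

lemma cnt_mono {S : Finset (Fin n)} {p q : Fin n} (hpq : p ≤ q) : cnt S p ≤ cnt S q := by
  apply Finset.card_le_card
  intro a ha
  simp only [mem_filter, mem_univ, true_and] at ha ⊢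
  exact ⟨lt_of_lt_of_le ha.1 hpq, ha.2⟩

lemma cnt_lt_iff {S : Finset (Fin n)} {p q : Fin n} (hp : p ∈ S) (hq : q ∈ S) :
    cnt S p < cnt S q ↔ p < q := by
  constructor
  · intro h
    by_contra hle
    exact absurd (cnt_mono (not_lt.mp hle)) (not_le.mpr h)
  · exact cnt_lt_cnt hp

lemma cnt_lt_card {S : Finset (Fin n)} {p : Fin n} (hp : p ∈ S) : cnt S p < S.card := by
  apply Finset.card_lt_card
  constructor
  · intro a ha
    simp only [mem_filter, mem_univ, true_and] at ha
    exact ha.2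
  · intro hsub
    have h2 := hsub hp
    simp only [mem_filter, mem_univ, true_and] at h2
    exact absurd h2.1 (lt_irrefl p)

lemma card_le_n (B : Finset (Fin n)) : B.card ≤ n := by
  have := Finset.card_le_card (Finset.subset_univ B)
  simpa using this

lemma card_compl_eq (B : Finset (Fin n)) : Bᶜ.card = n - B.card := by
  rw [Finset.card_compl]
  simp

lemma posFun_lt (B : Finset (Fin n)) (p : Fin n) : posFun B p < n := by
  rw [posFun_eq]
  split_ifs with h
  · exact (cnt_lt_card h).trans_le (card_le_n B)
  · have h1 : cnt Bᶜ p < Bᶜ.card := cnt_lt_card (by simpa using h)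
    rw [card_compl_eq] at h1
    have h2 := card_le_n B
    omega

lemma enc_lt (B : Finset (Fin n)) (p : Fin n) : enc B p < 2 * n := by
  unfold enc
  have := p.isLt
  split_ifs <;> omega

lemma posFun_lt_iff (B : Finset (Fin n)) (p q : Fin n) :
    posFun B p < posFun B q ↔ enc B p < enc B q := by
  have hp := p.isLt
  have hq := q.isLt
  rw [posFun_eq, posFun_eq]
  unfold enc
  by_cases hpB : p ∈ B <;> by_cases hqB : q ∈ B <;> simp only [hpB, hqB, if_true, if_false]
  · rw [cnt_lt_iff hpB hqB]
    exact ⟨fun h => by omega, fun h => by exact_mod_cast (by omega : (p:ℕ) < q)⟩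
  · have h1 : cnt B p < B.card := cnt_lt_card hpB
    constructor <;> intro _ <;> omega
  · have h1 : cnt B q < B.card := cnt_lt_card hqB
    constructor <;> intro h <;> omega
  · rw [Nat.add_lt_add_iff_left, cnt_lt_iff (by simpa using hpB) (by simpa using hqB)]
    exact ⟨fun h => by omega, fun h => by exact_mod_cast (by omega : (p:ℕ) < q)⟩

lemma posFun_injective (B : Finset (Fin n)) : Function.Injective (posFun B) := by
  intro p q h
  have h1 := posFun_lt_iff B p q
  have h2 := posFun_lt_iff B q p
  rw [h] at h1 h2
  simp only [lt_irrefl, false_iff, not_lt] at h1 h2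
  have henc : enc B p = enc B q := le_antisymm h2 h1
  unfold enc at henc
  have := p.isLt; have := q.isLt
  by_cases hpB : p ∈ B <;> by_cases hqB : q ∈ B <;>
      simp only [hpB, hqB, if_true, if_false] at henc
  · exact Fin.ext (by omega)
  · omega
  · omega
  · exact Fin.ext (by omega)

noncomputable def posPerm (B : Finset (Fin n)) : Equiv.Perm (Fin n) :=
  Equiv.ofBijective (fun p => (⟨posFun B p, posFun_lt B p⟩ : Fin n))
    ((Finite.injective_iff_bijective).mp fun p q h => posFun_injective B (by
      simpa using congrArg Fin.val h))

@[simp] lemma posPerm_apply_val (B : Finset (Fin n)) (p : Fin n) :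
    ((posPerm B p : Fin n) : ℕ) = posFun B p := rfl


/-- cardinality of the set of elements satisfying `P`, with a fixed decidability instance -/
noncomputable def cardF {α : Type*} [Fintype α] (P : α → Prop) : ℕ :=
  (univ.filter fun a => P a).card

lemma card_filter_eq_of_iff {α : Type*} [Fintype α] {P Q : α → Prop}
    (h1 : DecidablePred P) (h2 : DecidablePred Q) (h : ∀ a, P a ↔ Q a) :
    (@Finset.filter _ P h1 univ).card = (@Finset.filter _ Q h2 univ).card := by
  apply Finset.card_bij (fun a _ => a)
  · intro a ha
    simp only [mem_filter, mem_univ, true_and] at ha ⊢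
    exact (h a).mp ha
  · intro a _ b _ hab
    exact hab
  · intro b hb
    refine ⟨b, ?_, rfl⟩
    simp only [mem_filter, mem_univ, true_and] at hb ⊢
    exact (h b).mpr hb

lemma cardF_congr {α : Type*} [Fintype α] {P Q : α → Prop} (h : ∀ a, P a ↔ Q a) :
    cardF P = cardF Q := by
  unfold cardF
  congr 1
  exact Finset.filter_congr fun a _ => h a

lemma cardF_le {α : Type*} [Fintype α] {P Q : α → Prop} (h : ∀ a, P a → Q a) :
    cardF P ≤ cardF Q := by
  apply Finset.card_le_card
  intro a ha
  simp only [mem_filter, mem_univ, true_and] at ha ⊢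
  exact h a ha

lemma cardF_equiv {α β : Type*} [Fintype α] [Fintype β] (e : α ≃ β) (P : β → Prop) :
    cardF (fun a => P (e a)) = cardF P := by
  apply Finset.card_bij (fun a _ => e a)
  · intro a ha
    simp only [mem_filter, mem_univ, true_and] at ha ⊢
    exact ha
  · intro a _ b _ h
    exact e.injective h
  · intro b hb
    refine ⟨e.symm b, ?_, e.apply_symm_apply b⟩
    simp only [mem_filter, mem_univ, true_and] at hb ⊢
    rwa [e.apply_symm_apply]

/-- positions of the marked cards -/
noncomputable def mark (σ : Equiv.Perm (Fin n)) (A : Finset (Fin n)) : Finset (Fin n) :=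
  univ.filter fun p => σ p ∈ A

lemma mem_mark {σ : Equiv.Perm (Fin n)} {A : Finset (Fin n)} {p : Fin n} :
    p ∈ mark σ A ↔ σ p ∈ A := by simp [mark]

lemma card_mark (σ : Equiv.Perm (Fin n)) (A : Finset (Fin n)) : (mark σ A).card = A.card := by
  have : mark σ A = A.image σ.symm := by
    ext p
    simp only [mem_mark, Finset.mem_image]
    constructor
    · intro h; exact ⟨σ p, h, by simp⟩
    · rintro ⟨a, ha, rfl⟩; simpa using ha
  rw [this, Finset.card_image_of_injective _ σ.symm.injective]

lemma rifflePos_eq (A : Finset (Fin n)) (σ : Equiv.Perm (Fin n)) (p : Fin n) :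
    rifflePos A σ p = posFun (mark σ A) p := by
  unfold rifflePos posFun
  rw [card_mark]
  have h1 : (univ.filter fun p' => p' < p ∧ σ p' ∈ A)
      = (univ.filter fun p' => p' < p ∧ p' ∈ mark σ A) := by
    apply Finset.filter_congr; intro a _; simp [mem_mark]
  have h2 : (univ.filter fun p' => p' < p ∧ σ p' ∉ A)
      = (univ.filter fun p' => p' < p ∧ p' ∉ mark σ A) := by
    apply Finset.filter_congr; intro a _; simp [mem_mark]
  rw [h1, h2]
  by_cases h : σ p ∈ A
  · rw [if_pos h, if_pos (mem_mark.mpr h)]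
  · rw [if_neg h, if_neg (fun hc => h (mem_mark.mp hc))]

/-- result of the `A`-shuffle applied to `σ` -/
noncomputable def step (A : Finset (Fin n)) (σ : Equiv.Perm (Fin n)) : Equiv.Perm (Fin n) :=
  σ * (posPerm (mark σ A))⁻¹

lemma step_symm_apply (A : Finset (Fin n)) (σ : Equiv.Perm (Fin n)) (p : Fin n) :
    (step A σ).symm (σ p) = posPerm (mark σ A) p := by
  show (step A σ)⁻¹ (σ p) = _
  rw [step, mul_inv_rev, inv_inv, Equiv.Perm.mul_apply, Equiv.Perm.inv_def, Equiv.symm_apply_apply]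

lemma step_cond_iff (A : Finset (Fin n)) (σ τ : Equiv.Perm (Fin n)) :
    (∀ p : Fin n, ((τ.symm (σ p) : Fin n) : ℕ) = rifflePos A σ p) ↔ step A σ = τ := by
  constructor
  · intro h
    have h' : ∀ p, τ.symm (σ p) = posPerm (mark σ A) p := by
      intro p
      apply Fin.ext
      rw [h p, rifflePos_eq, posPerm_apply_val]
    refine Equiv.ext fun q => ?_
    show (σ * (posPerm (mark σ A))⁻¹) q = τ q
    rw [Equiv.Perm.mul_apply]
    have h2 := h' ((posPerm (mark σ A))⁻¹ q)
    rw [Equiv.Perm.inv_def, Equiv.apply_symm_apply] at h2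
    have h3 := congrArg τ h2
    rwa [Equiv.apply_symm_apply] at h3
  · rintro rfl
    intro p
    rw [step_symm_apply, posPerm_apply_val, rifflePos_eq]

lemma kernel_eq (σ τ : Equiv.Perm (Fin n)) :
    riffleKernel n σ τ = (cardF (fun A : Finset (Fin n) => step A σ = τ) : ℝ) / 2 ^ n := by
  unfold riffleKernel cardF
  congr 1
  norm_cast
  exact card_filter_eq_of_iff _ _ fun A => step_cond_iff A σ τ

/-- applying a sequence of shuffles -/
noncomputable def applySeq : {t : ℕ} → (Fin t → Finset (Fin n)) → Equiv.Perm (Fin n) →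
    Equiv.Perm (Fin n)
  | 0, _, σ => σ
  | _+1, f, σ => applySeq (Fin.tail f) (step (f 0) σ)

lemma applySeq_zero (f : Fin 0 → Finset (Fin n)) (σ : Equiv.Perm (Fin n)) :
    applySeq f σ = σ := rfl

lemma applySeq_succ {t : ℕ} (f : Fin (t+1) → Finset (Fin n)) (σ : Equiv.Perm (Fin n)) :
    applySeq f σ = applySeq (Fin.tail f) (step (f 0) σ) := rfl

lemma cardF_prod {β γ : Type*} [Fintype β] [Fintype γ] (R : β → γ → Prop) :
    cardF (fun ag : β × γ => R ag.1 ag.2) = ∑ A : β, cardF (fun g => R A g) := by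
  unfold cardF
  rw [Finset.card_filter, ← Finset.univ_product_univ, Finset.sum_product]
  exact Finset.sum_congr rfl fun A _ => (Finset.card_filter _ _).symm

lemma sum_comp_fiber {α β : Type*} [Fintype α] [Fintype β] (f : α → β) (g : β → ℕ) :
    ∑ a : α, g (f a) = ∑ b : β, cardF (fun a => f a = b) * g b := by
  have h1 : ∀ a, g (f a) = ∑ b : β, if f a = b then g b else 0 := by
    intro a
    rw [Finset.sum_ite_eq univ (f a) g]
    simp
  rw [Finset.sum_congr rfl fun a _ => h1 a, Finset.sum_comm]
  apply Finset.sum_congr rfl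
  intro b _
  rw [← Finset.sum_filter, Finset.sum_const, smul_eq_mul]
  rfl

lemma count_succ (t : ℕ) (σ₀ x : Equiv.Perm (Fin n)) :
    cardF (fun f : Fin (t+1) → Finset (Fin n) => applySeq f σ₀ = x)
      = ∑ τ : Equiv.Perm (Fin n),
          cardF (fun A : Finset (Fin n) => step A σ₀ = τ) *
          cardF (fun g : Fin t → Finset (Fin n) => applySeq g τ = x) := by
  rw [← cardF_equiv (Fin.consEquiv (fun _ : Fin (t+1) => Finset (Fin n)))
    (fun f => applySeq f σ₀ = x)]
  have hstep : cardF (fun Ag : Finset (Fin n) × (Fin t → Finset (Fin n)) =>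
      applySeq ((Fin.consEquiv (fun _ : Fin (t+1) => Finset (Fin n))) Ag) σ₀ = x)
      = cardF (fun Ag : Finset (Fin n) × (Fin t → Finset (Fin n)) =>
        applySeq Ag.2 (step Ag.1 σ₀) = x) := by
    apply cardF_congr
    intro Ag
    have h2 : applySeq (Fin.cons Ag.1 Ag.2 : Fin (t+1) → Finset (Fin n)) σ₀
        = applySeq Ag.2 (step Ag.1 σ₀) := by
      rw [applySeq_succ, Fin.tail_cons, Fin.cons_zero]
    have he : ((Fin.consEquiv (fun _ : Fin (t+1) => Finset (Fin n))) Ag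
        : Fin (t+1) → Finset (Fin n)) = Fin.cons Ag.1 Ag.2 := rfl
    rw [he, h2]
  rw [hstep, cardF_prod (fun A g => applySeq g (step A σ₀) = x)]
  exact sum_comp_fiber (fun A : Finset (Fin n) => step A σ₀)
    (fun τ => cardF (fun g : Fin t → Finset (Fin n) => applySeq g τ = x))

lemma kernel_pow (t : ℕ) (σ₀ x : Equiv.Perm (Fin n)) :
    (riffleKernel n ^ t) σ₀ x
      = (cardF (fun f : Fin t → Finset (Fin n) => applySeq f σ₀ = x) : ℝ) / 2 ^ (n * t) := by
  induction t generalizing σ₀ with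
  | zero =>
    rw [pow_zero]
    have hcard : cardF (fun f : Fin 0 → Finset (Fin n) => applySeq f σ₀ = x)
        = if σ₀ = x then 1 else 0 := by
      have h0 : cardF (fun f : Fin 0 → Finset (Fin n) => applySeq f σ₀ = x)
          = cardF (fun _ : Fin 0 → Finset (Fin n) => σ₀ = x) := by
        apply cardF_congr; intro f; rfl
      rw [h0]
      unfold cardF
      split_ifs with h
      · simp only [h, Finset.filter_true_of_mem (fun _ _ => rfl)]
        simp [Finset.card_univ]
      · simp [h]
    rw [hcard, Matrix.one_apply]
    split_ifs <;> simp
  | succ t ih =>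
    rw [pow_succ', Matrix.mul_apply]
    have hterm : ∀ τ, riffleKernel n σ₀ τ * (riffleKernel n ^ t) τ x
        = ((cardF (fun A : Finset (Fin n) => step A σ₀ = τ) *
            cardF (fun g : Fin t → Finset (Fin n) => applySeq g τ = x) : ℕ) : ℝ)
          / 2 ^ (n * (t+1)) := by
      intro τ
      rw [kernel_eq, ih]
      push_cast
      rw [div_mul_div_comm, ← pow_add]
      ring_nf
    rw [Finset.sum_congr rfl (fun τ _ => hterm τ), ← Finset.sum_div, ← Nat.cast_sum,
      ← count_succ]

-- chunk 3 : appended to b.lean before `end RiffleAux`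

/-- binary weight of the label sequence of card `i` -/
noncomputable def wval {t : ℕ} (f : Fin t → Finset (Fin n)) (i : Fin n) : ℕ :=
  ∑ k : Fin t, if i ∈ f k then 0 else 2 ^ (k : ℕ)

/-- sorting key of card `i` -/
noncomputable def key {t : ℕ} (f : Fin t → Finset (Fin n)) (σ₀ : Equiv.Perm (Fin n))
    (i : Fin n) : ℕ :=
  wval f i * n + ((σ₀.symm i : Fin n) : ℕ)

lemma wval_succ {t : ℕ} (f : Fin (t+1) → Finset (Fin n)) (i : Fin n) :
    wval f i = (if i ∈ f 0 then 0 else 1) + 2 * wval (Fin.tail f) i := by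
  unfold wval
  rw [Fin.sum_univ_succ]
  have h0 : (if i ∈ f 0 then 0 else 2 ^ ((0 : Fin (t+1)) : ℕ)) = (if i ∈ f 0 then 0 else 1) := by
    split_ifs <;> simp
  rw [h0, Finset.mul_sum]
  congr 1
  apply Finset.sum_congr rfl
  intro k _
  have h1 : ((Fin.succ k : Fin (t+1)) : ℕ) = (k : ℕ) + 1 := rfl
  have ht : Fin.tail f k = f (Fin.succ k) := rfl
  rw [h1, pow_succ, ht]
  split_ifs <;> ring

lemma lex_lt_iff {m a a' r r' : ℕ} (h1 : r < m) (h2 : r' < m) :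
    a * m + r < a' * m + r' ↔ a < a' ∨ (a = a' ∧ r < r') := by
  have hkey : ∀ b b' s s' : ℕ, s < m → b < b' → b * m + s < b' * m + s' := by
    intro b b' s s' hs hb
    calc b * m + s < b * m + m := by omega
      _ = (b + 1) * m := by ring
      _ ≤ b' * m := Nat.mul_le_mul_right m (by omega)
      _ ≤ b' * m + s' := Nat.le_add_right _ _
  constructor
  · intro h
    rcases lt_trichotomy a a' with h' | h' | h'
    · exact Or.inl h'
    · subst h'
      exact Or.inr ⟨rfl, by omega⟩
    · exact absurd (hkey a' a r' r h2 h') (by omega)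
  · rintro (h | ⟨rfl, h⟩)
    · exact hkey a a' r r' h1 h
    · omega

lemma key_succ {t : ℕ} (f : Fin (t+1) → Finset (Fin n)) (σ₀ : Equiv.Perm (Fin n)) (i : Fin n) :
    key f σ₀ i = wval (Fin.tail f) i * (2 * n) + enc (mark σ₀ (f 0)) (σ₀.symm i) := by
  have hmem : σ₀.symm i ∈ mark σ₀ (f 0) ↔ i ∈ f 0 := by
    rw [mem_mark, Equiv.apply_symm_apply]
  unfold key enc
  rw [wval_succ]
  by_cases h : i ∈ f 0
  · rw [if_pos h, if_pos (hmem.mpr h)]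
    ring
  · rw [if_neg h, if_neg (fun hc => h (hmem.mp hc))]
    ring

lemma key_step {t : ℕ} (f : Fin (t+1) → Finset (Fin n)) (σ₀ : Equiv.Perm (Fin n)) (i : Fin n) :
    key (Fin.tail f) (step (f 0) σ₀) i
      = wval (Fin.tail f) i * n + posFun (mark σ₀ (f 0)) (σ₀.symm i) := by
  unfold key
  have h1 : (step (f 0) σ₀).symm i = posPerm (mark σ₀ (f 0)) (σ₀.symm i) := by
    have := step_symm_apply (f 0) σ₀ (σ₀.symm i)
    rwa [Equiv.apply_symm_apply] at this
  rw [h1, posPerm_apply_val]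

lemma applySeq_symm_lt_iff {t : ℕ} (f : Fin t → Finset (Fin n)) (σ₀ : Equiv.Perm (Fin n))
    (i j : Fin n) :
    (((applySeq f σ₀).symm i : Fin n) : ℕ) < (((applySeq f σ₀).symm j : Fin n) : ℕ)
      ↔ key f σ₀ i < key f σ₀ j := by
  induction t generalizing σ₀ with
  | zero =>
    rw [applySeq_zero]
    unfold key wval
    simp
  | succ t ih =>
    rw [applySeq_succ, ih (Fin.tail f) (step (f 0) σ₀), key_step, key_step,
      key_succ, key_succ]
    have hn : 0 < n := i.pos
    rw [lex_lt_iff (posFun_lt _ _) (posFun_lt _ _), lex_lt_iff (enc_lt _ _) (enc_lt _ _)]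
    constructor
    · rintro (h | ⟨he, h⟩)
      · exact Or.inl h
      · exact Or.inr ⟨he, (posFun_lt_iff _ _ _).mp h⟩
    · rintro (h | ⟨he, h⟩)
      · exact Or.inl h
      · exact Or.inr ⟨he, (posFun_lt_iff _ _ _).mpr h⟩


/-! ### determination of the permutation by the keys -/

lemma perm_eq_of_lt_iff {y x : Equiv.Perm (Fin n)}
    (h : ∀ i j, (((y.symm i : Fin n) : ℕ) < ((y.symm j : Fin n) : ℕ))
      ↔ (((x.symm i : Fin n) : ℕ) < ((x.symm j : Fin n) : ℕ))) : y = x := by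
  have hsm : StrictMono (fun q => x.symm (y q)) := by
    intro a b hab
    have h1 : ((y.symm (y a) : Fin n) : ℕ) < ((y.symm (y b) : Fin n) : ℕ) := by
      rw [Equiv.symm_apply_apply, Equiv.symm_apply_apply]
      exact hab
    have h2 := (h (y a) (y b)).mp h1
    exact h2
  have hid : StrictMono (id : Fin n → Fin n) := fun a b hab => hab
  have hrange : Set.range (fun q => x.symm (y q)) = Set.range (id : Fin n → Fin n) := by
    rw [Set.range_id]
    exact Set.range_eq_univ.mpr (x.symm.surjective.comp y.surjective)
  have heq : (fun q => x.symm (y q)) = id := by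
    set_option linter.deprecated false in
    exact (hsm.range_inj hid).mp hrange
  ext q
  have := congrFun heq q
  simp only [id_eq] at this
  have h5 := congrArg x this
  rw [Equiv.apply_symm_apply] at h5
  exact congrArg Fin.val h5

lemma apply_eq_iff {t : ℕ} (f : Fin t → Finset (Fin n)) (σ₀ x : Equiv.Perm (Fin n)) :
    applySeq f σ₀ = x ↔ ∀ i j : Fin n,
      (((x.symm i : Fin n) : ℕ) < ((x.symm j : Fin n) : ℕ)) ↔ key f σ₀ i < key f σ₀ j := by
  constructor
  · rintro rfl
    intro i j
    exact applySeq_symm_lt_iff f σ₀ i j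
  · intro h
    apply perm_eq_of_lt_iff
    intro i j
    rw [applySeq_symm_lt_iff f σ₀ i j, h i j]

/-- the shuffle condition in terms of an injective value function realising the weights -/
lemma cond_iff {t : ℕ} (f : Fin t → Finset (Fin n)) (σ₀ x : Equiv.Perm (Fin n))
    (v : Fin n → Fin (2^t)) (hinj : Function.Injective v)
    (hwf : ∀ i, wval f i = (v i : ℕ)) :
    applySeq f σ₀ = x ↔ StrictMono (fun q => v (x q)) := by
  have hkey : ∀ i, key f σ₀ i = (v i : ℕ) * n + ((σ₀.symm i : Fin n) : ℕ) := by
    intro i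
    rw [key, hwf]
  have hb : ∀ i : Fin n, ((σ₀.symm i : Fin n) : ℕ) < n := fun i => (σ₀.symm i).isLt
  rw [apply_eq_iff]
  constructor
  · intro h q q' hqq'
    have h1 := (h (x q) (x q')).mp (by
      rw [Equiv.symm_apply_apply, Equiv.symm_apply_apply]
      exact hqq')
    rw [hkey, hkey, lex_lt_iff (hb _) (hb _)] at h1
    rcases h1 with h1 | ⟨h1, _⟩
    · exact Fin.lt_def.mpr h1
    · exact absurd (x.injective (hinj (Fin.ext h1))) (ne_of_lt hqq')
  · intro hsm i j
    by_cases hij : i = j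
    · subst hij; simp
    have hvij : v i ≠ v j := fun hc => hij (hinj hc)
    have hiff : x.symm i < x.symm j ↔ v i < v j := by
      have := hsm.lt_iff_lt (a := x.symm i) (b := x.symm j)
      rw [Equiv.apply_symm_apply, Equiv.apply_symm_apply] at this
      exact this.symm
    rw [hkey, hkey, lex_lt_iff (hb _) (hb _)]
    constructor
    · intro hlt
      exact Or.inl (Fin.lt_def.mp (hiff.mp (Fin.lt_def.mpr hlt)))
    · rintro (hlt | ⟨heq, _⟩)
      · exact Fin.lt_def.mp (hiff.mpr (Fin.lt_def.mpr hlt))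
      · exact absurd (Fin.ext heq) hvij

/-! ### the weight equivalence -/

lemma sum_range_two_pow (t : ℕ) : ∑ i ∈ Finset.range t, 2 ^ i = 2 ^ t - 1 := by
  induction t with
  | zero => simp
  | succ t iht =>
    rw [Finset.sum_range_succ, iht, pow_succ]
    have := Nat.one_le_two_pow (n := t)
    omega

lemma two_pow_sum_bound {t : ℕ} (s : Fin t → Bool) :
    (∑ k : Fin t, if s k then 2 ^ (k : ℕ) else 0) < 2 ^ t := by
  have h1 : (∑ k : Fin t, if s k then 2 ^ (k : ℕ) else 0) ≤ ∑ k : Fin t, 2 ^ (k : ℕ) := by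
    apply Finset.sum_le_sum
    intro k _
    split_ifs <;> simp
  have h2 : ∑ k : Fin t, 2 ^ (k : ℕ) = 2 ^ t - 1 := by
    rw [Fin.sum_univ_eq_sum_range]
    exact sum_range_two_pow t
  have h3 : (1 : ℕ) ≤ 2 ^ t := Nat.one_le_two_pow
  omega

lemma boolsum_succ {t : ℕ} (s : Fin (t+1) → Bool) :
    (∑ k : Fin (t+1), if s k then 2 ^ (k : ℕ) else 0)
      = (if s 0 then 1 else 0) + 2 * ∑ k : Fin t, if s (Fin.succ k) then 2 ^ (k : ℕ) else 0 := by
  rw [Fin.sum_univ_succ]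
  have h0 : (if s 0 then 2 ^ ((0 : Fin (t+1)) : ℕ) else 0) = (if s 0 then 1 else 0) := by
    split_ifs <;> simp
  rw [h0, Finset.mul_sum]
  congr 1
  apply Finset.sum_congr rfl
  intro k _
  have h1 : ((Fin.succ k : Fin (t+1)) : ℕ) = (k : ℕ) + 1 := rfl
  rw [h1, pow_succ]
  split_ifs <;> ring

lemma boolsum_injective : ∀ {t : ℕ} (s s' : Fin t → Bool),
    (∑ k : Fin t, if s k then 2 ^ (k : ℕ) else 0)
      = (∑ k : Fin t, if s' k then 2 ^ (k : ℕ) else 0) → s = s' := by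
  intro t
  induction t with
  | zero => intro s s' _; funext k; exact k.elim0
  | succ t iht =>
    intro s s' h
    rw [boolsum_succ, boolsum_succ] at h
    have htail : (∑ k : Fin t, if s (Fin.succ k) then 2 ^ (k : ℕ) else 0)
        = ∑ k : Fin t, if s' (Fin.succ k) then 2 ^ (k : ℕ) else 0 := by
      cases hs : s 0 <;> cases hs' : s' 0 <;> rw [hs, hs'] at h <;> simp at h <;> omega
    have hzero : s 0 = s' 0 := by
      cases hs : s 0 <;> cases hs' : s' 0 <;> rw [hs, hs'] at h <;> simp at h <;> omega
    have htl := iht (fun k => s (Fin.succ k)) (fun k => s' (Fin.succ k)) htail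
    funext k
    induction k using Fin.cases with
    | zero => exact hzero
    | succ k => exact congrFun htl k

/-- equivalence sending a shuffle sequence to the value function of its weights -/
noncomputable def seqEquivBool (t : ℕ) :
    (Fin t → Finset (Fin n)) ≃ (Fin n → Fin t → Bool) where
  toFun f := fun i k => decide (i ∉ f k)
  invFun W := fun k => univ.filter fun i => W i k = false
  left_inv f := by
    funext k
    ext i
    simp
  right_inv W := by
    funext i k
    simp only [Finset.mem_filter, Finset.mem_univ, true_and]
    cases h : W i k <;> simp [h]

noncomputable def boolEquivFin (t : ℕ) : (Fin t → Bool) ≃ Fin (2^t) := by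
  apply Equiv.ofBijective
    (fun s => (⟨∑ k : Fin t, if s k then 2 ^ (k : ℕ) else 0, two_pow_sum_bound s⟩ : Fin (2^t)))
  rw [Fintype.bijective_iff_injective_and_card]
  constructor
  · intro s s' h
    exact boolsum_injective s s' (by simpa using congrArg Fin.val h)
  · simp

noncomputable def seqEquivVal (t : ℕ) : (Fin t → Finset (Fin n)) ≃ (Fin n → Fin (2^t)) :=
  (seqEquivBool t).trans (Equiv.arrowCongr (Equiv.refl (Fin n)) (boolEquivFin t))

lemma seqEquivVal_apply (t : ℕ) (f : Fin t → Finset (Fin n)) (i : Fin n) :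
    ((seqEquivVal t f i : Fin (2^t)) : ℕ) = wval f i := by
  show (∑ k : Fin t, if decide (i ∉ f k) = true then 2 ^ (k : ℕ) else 0) = wval f i
  unfold wval
  apply Finset.sum_congr rfl
  intro k _
  by_cases h : i ∈ f k <;> simp [h]

/-! ### counting -/

lemma cardF_precomp {t : ℕ} (x : Equiv.Perm (Fin n)) :
    cardF (fun v : Fin n → Fin (2^t) => StrictMono (fun q => v (x q)))
      = cardF (fun u : Fin n → Fin (2^t) => StrictMono u) := by
  have := cardF_equiv (Equiv.arrowCongr x.symm (Equiv.refl (Fin (2^t))))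
    (fun u : Fin n → Fin (2^t) => StrictMono u)
  rw [← this]
  apply cardF_congr
  intro v
  constructor
  · intro h
    convert h using 2
    rfl
  · intro h
    convert h using 2
    rfl

lemma sm_inj {t : ℕ} {v : Fin n → Fin (2^t)} {x : Equiv.Perm (Fin n)}
    (h : StrictMono (fun q => v (x q))) : Function.Injective v := by
  intro a b hab
  have h2 : x.symm a = x.symm b := h.injective (show v (x (x.symm a)) = v (x (x.symm b)) by
    rw [Equiv.apply_symm_apply, Equiv.apply_symm_apply]
    exact hab)
  have h3 := congrArg x h2
  rwa [Equiv.apply_symm_apply, Equiv.apply_symm_apply] at h3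

lemma count_lower {t : ℕ} (σ₀ x : Equiv.Perm (Fin n)) :
    cardF (fun u : Fin n → Fin (2^t) => StrictMono u)
      ≤ cardF (fun f : Fin t → Finset (Fin n) => applySeq f σ₀ = x) := by
  rw [← cardF_precomp (t := t) x]
  have h1 : cardF (fun v : Fin n → Fin (2^t) => StrictMono (fun q => v (x q)))
      = cardF (fun v : Fin n → Fin (2^t) =>
          Function.Injective v ∧ StrictMono (fun q => v (x q))) := by
    apply cardF_congr
    intro v
    exact ⟨fun h => ⟨sm_inj h, h⟩, fun h => h.2⟩
  rw [h1, ← cardF_equiv (seqEquivVal t) (fun v : Fin n → Fin (2^t) =>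
    Function.Injective v ∧ StrictMono (fun q => v (x q)))]
  have h2 : cardF (fun f : Fin t → Finset (Fin n) =>
      Function.Injective (seqEquivVal t f) ∧ StrictMono (fun q => seqEquivVal t f (x q)))
      = cardF (fun f : Fin t → Finset (Fin n) =>
          Function.Injective (seqEquivVal t f) ∧ applySeq f σ₀ = x) := by
    apply cardF_congr
    intro f
    constructor
    · rintro ⟨hi, hs⟩
      exact ⟨hi, (cond_iff f σ₀ x _ hi (fun i => (seqEquivVal_apply t f i).symm)).mpr hs⟩
    · rintro ⟨hi, hs⟩
      exact ⟨hi, (cond_iff f σ₀ x _ hi (fun i => (seqEquivVal_apply t f i).symm)).mp hs⟩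
  rw [h2]
  exact cardF_le fun f h => h.2


lemma sort_eq_iff {t : ℕ} (v : Fin n → Fin (2^t)) (hi : Function.Injective v)
    (x' : Equiv.Perm (Fin n)) :
    Tuple.sort v = x' ↔ StrictMono (fun q => v (x' q)) := by
  constructor
  · rintro rfl
    exact (Tuple.monotone_sort v).strictMono_of_injective (hi.comp (Tuple.sort v).injective)
  · intro hsm
    have hsm2 : StrictMono (v ∘ Tuple.sort v) :=
      (Tuple.monotone_sort v).strictMono_of_injective (hi.comp (Tuple.sort v).injective)
    have hrange : Set.range (v ∘ Tuple.sort v) = Set.range (fun q => v (x' q)) := by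
      rw [Function.Surjective.range_comp (Tuple.sort v).surjective v,
        show (fun q => v (x' q)) = v ∘ x' from rfl,
        Function.Surjective.range_comp x'.surjective v]
    have heq : v ∘ Tuple.sort v = fun q => v (x' q) := by
      set_option linter.deprecated false in
      exact (hsm2.range_inj hsm).mp hrange
    ext q
    have h2 : v (Tuple.sort v q) = v (x' q) := congrFun heq q
    exact congrArg Fin.val (hi h2)

lemma cardF_fiber {α β : Type*} [Fintype α] [Fintype β] (P : α → Prop) (f : α → β) :
    cardF P = ∑ b : β, cardF (fun a => P a ∧ f a = b) := by
  unfold cardF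
  rw [Finset.card_filter]
  have h1 : ∀ a : α, (if P a then (1:ℕ) else 0) = ∑ b : β, if P a ∧ f a = b then 1 else 0 := by
    intro a
    rw [← Finset.card_filter]
    by_cases hP : P a
    · rw [if_pos hP]
      have he : (univ.filter fun b : β => P a ∧ f a = b) = {f a} := by
        ext b
        simp [hP, eq_comm]
      rw [he, Finset.card_singleton]
    · rw [if_neg hP]
      have he : (univ.filter fun b : β => P a ∧ f a = b) = ∅ := by
        ext b
        simp [hP]
      rw [he, Finset.card_empty]
  rw [Finset.sum_congr rfl fun a _ => h1 a, Finset.sum_comm]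
  apply Finset.sum_congr rfl
  intro b _
  rw [Finset.card_filter]
  refine Finset.sum_congr rfl fun a _ => ?_
  congr

lemma count_inj_eq (t : ℕ) :
    cardF (fun v : Fin n → Fin (2^t) => Function.Injective v)
      = Nat.factorial n * cardF (fun u : Fin n → Fin (2^t) => StrictMono u) := by
  have hfib : ∀ x' : Equiv.Perm (Fin n),
      cardF (fun v : Fin n → Fin (2^t) => Function.Injective v ∧ Tuple.sort v = x')
        = cardF (fun u : Fin n → Fin (2^t) => StrictMono u) := by
    intro x'
    rw [cardF_congr (Q := fun v : Fin n → Fin (2^t) => StrictMono (fun q => v (x' q)))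
      (fun v => ⟨fun h => (sort_eq_iff v h.1 x').mp h.2,
        fun hs => ⟨sm_inj hs, (sort_eq_iff v (sm_inj hs) x').mpr hs⟩⟩)]
    exact cardF_precomp x'
  rw [cardF_fiber (fun v : Fin n → Fin (2^t) => Function.Injective v)
    (fun v => Tuple.sort v)]
  simp only [hfib]
  rw [Finset.sum_const, smul_eq_mul, Finset.card_univ, Fintype.card_perm, Fintype.card_fin]

lemma cardF_inj_desc (t : ℕ) :
    cardF (fun v : Fin n → Fin (2^t) => Function.Injective v) = (2^t).descFactorial n := by
  have h0 : cardF (fun v : Fin n → Fin (2^t) => Function.Injective v)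
      = (univ.filter (Function.Injective : (Fin n → Fin (2^t)) → Prop)).card :=
    card_filter_eq_of_iff _ _ fun v => Iff.rfl
  rw [h0, ← Fintype.card_subtype,
    Fintype.card_congr (Equiv.subtypeInjectiveEquivEmbedding (Fin n) (Fin (2^t))),
    Fintype.card_embedding_eq, Fintype.card_fin, Fintype.card_fin]


/-! ### the analytic bound -/

lemma desc_mul_bound (M : ℕ) :
    ∀ m : ℕ, m ≤ M →
      (M:ℝ) * ((M:ℝ)^m - (M.descFactorial m : ℝ)) ≤ (M:ℝ)^m * (m * ((m:ℝ) - 1) / 2) := by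
  intro m
  induction m with
  | zero => intro _; simp
  | succ m ih =>
    intro hm1
    have hmM : m ≤ M := le_of_lt (Nat.lt_of_lt_of_le (Nat.lt_succ_self m) hm1)
    have ih' := ih hmM
    have hd : (M.descFactorial m : ℝ) ≤ (M:ℝ)^m := by
      exact_mod_cast Nat.cast_le.mpr (Nat.descFactorial_le_pow M m)
    have hdesc : (M.descFactorial (m+1) : ℝ) = ((M:ℝ) - m) * (M.descFactorial m : ℝ) := by
      rw [Nat.descFactorial_succ]
      push_cast [Nat.cast_sub hmM]
      ring
    have hM0 : (0:ℝ) ≤ M := by positivity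
    rw [hdesc]
    have expand : (M:ℝ) * ((M:ℝ)^(m+1) - ((M:ℝ) - m) * (M.descFactorial m : ℝ))
        = (M:ℝ) * ((M:ℝ) * ((M:ℝ)^m - (M.descFactorial m : ℝ)))
          + (M:ℝ) * m * (M.descFactorial m : ℝ) := by ring
    rw [expand]
    have h1 : (M:ℝ) * ((M:ℝ) * ((M:ℝ)^m - (M.descFactorial m : ℝ)))
        ≤ (M:ℝ) * ((M:ℝ)^m * (m * ((m:ℝ) - 1) / 2)) :=
      mul_le_mul_of_nonneg_left ih' hM0
    have h2 : (M:ℝ) * m * (M.descFactorial m : ℝ) ≤ (M:ℝ) * m * (M:ℝ)^m :=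
      mul_le_mul_of_nonneg_left hd (by positivity)
    have hfin : (M:ℝ) * ((M:ℝ)^m * (m * ((m:ℝ) - 1) / 2)) + (M:ℝ) * m * (M:ℝ)^m
        = (M:ℝ)^(m+1) * ((m+1) * (((m:ℕ)+1:ℝ) - 1) / 2) := by
      push_cast
      ring
    push_cast
    push_cast at h1 h2 hfin ih' hd
    linarith

lemma desc_bound (t : ℕ) :
    1 - ((2^t).descFactorial n : ℝ) / 2 ^ (n * t)
      ≤ (n:ℝ) * ((n:ℝ) - 1) / 2 * ((1:ℝ)/2) ^ t := by
  set M : ℕ := 2^t with hMdef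
  have hM1 : 1 ≤ M := Nat.one_le_two_pow
  have hM0 : (0:ℝ) < M := by exact_mod_cast hM1
  have hpow : (2:ℝ) ^ (n * t) = (M:ℝ)^n := by
    rw [hMdef]
    push_cast
    rw [mul_comm n t, pow_mul]
  have hhalf : ((1:ℝ)/2) ^ t = ((M:ℝ))⁻¹ := by
    rw [hMdef, div_pow, one_pow, one_div]
    push_cast
    norm_num
  rw [hpow, hhalf]
  set X : ℝ := (M:ℝ)^n with hXdef
  have hX : (0:ℝ) < X := by positivity
  by_cases hnM : n ≤ M
  · have key := desc_mul_bound M n hnM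
    rw [← hXdef] at key
    have e1 : 1 - (M.descFactorial n : ℝ)/X = (X - (M.descFactorial n : ℝ))/X := by
      field_simp
    have e2 : (n:ℝ) * ((n:ℝ) - 1) / 2 * ((M:ℝ))⁻¹
        = (X * ((n:ℝ) * ((n:ℝ) - 1) / 2)) / ((M:ℝ) * X) := by
      field_simp
    rw [e1, e2, div_le_div_iff₀ hX (mul_pos hM0 hX)]
    nlinarith [mul_le_mul_of_nonneg_right key (le_of_lt hX)]
  · push_neg at hnM
    have hdz : M.descFactorial n = 0 := Nat.descFactorial_eq_zero_iff_lt.mpr hnM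
    rw [hdz]
    have hn2 : (2:ℝ) ≤ (n:ℝ) := by exact_mod_cast (by omega : 2 ≤ n)
    have hMn1 : (M:ℝ) ≤ (n:ℝ) - 1 := by
      have h1 : (M:ℕ) + 1 ≤ n := hnM
      have h2 : ((M:ℕ):ℝ) + 1 ≤ (n:ℝ) := by exact_mod_cast h1
      linarith
    simp only [Nat.cast_zero, zero_div, sub_zero]
    rw [← div_eq_mul_inv, le_div_iff₀ hM0]
    nlinarith

end RiffleAux

/-- For the inverse riffle shuffle with `t ≥ 2 log₂ n + c`, `c ≥ 0`, the separation
distance (w.r.t. the uniform stationary distribution `π ≡ 1/n!`) satisfies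
`s(t) ≤ (n(n-1)/2) (1/2)^t ≤ 1/2^{c+1}`. -/
theorem inverse_riffle_separation (n : ℕ) (hn : 1 ≤ n) (c : ℝ) (hc : 0 ≤ c) (t : ℕ)
    (ht : 2 * Real.logb 2 n + c ≤ t) :
    (∀ σ₀ x : Equiv.Perm (Fin n),
      1 - (riffleKernel n ^ t) σ₀ x / ((1 : ℝ) / (Nat.factorial n))
        ≤ (n : ℝ) * (n - 1) / 2 * (1 / 2) ^ t) ∧
    (n : ℝ) * (n - 1) / 2 * (1 / 2) ^ t ≤ 1 / 2 ^ (c + 1) := by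
  constructor
  · intro σ₀ x
    have hker := RiffleAux.kernel_pow (n := n) t σ₀ x
    have hnat : (2^t).descFactorial n
        ≤ n.factorial * RiffleAux.cardF (fun f : Fin t → Finset (Fin n) =>
            RiffleAux.applySeq f σ₀ = x) := by
      have h1 : (2^t).descFactorial n = n.factorial
          * RiffleAux.cardF (fun u : Fin n → Fin (2^t) => StrictMono u) := by
        rw [← RiffleAux.cardF_inj_desc, RiffleAux.count_inj_eq]
      rw [h1]
      exact Nat.mul_le_mul_left _ (RiffleAux.count_lower σ₀ x)
    have hpow0 : (0:ℝ) < 2^(n*t) := by positivity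
    have hstep : ((2^t).descFactorial n : ℝ) / 2^(n*t)
        ≤ (RiffleAux.cardF (fun f : Fin t → Finset (Fin n) =>
            RiffleAux.applySeq f σ₀ = x) : ℝ) / 2^(n*t) * (n.factorial : ℝ) := by
      rw [div_mul_eq_mul_div, div_le_div_iff₀ hpow0 hpow0]
      have hcast : ((2^t).descFactorial n : ℝ)
          ≤ (RiffleAux.cardF (fun f : Fin t → Finset (Fin n) =>
              RiffleAux.applySeq f σ₀ = x) : ℝ) * (n.factorial : ℝ) := by
        rw [mul_comm]
        exact_mod_cast hnat
      nlinarith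
    have hb := RiffleAux.desc_bound (n := n) t
    rw [hker, one_div, div_inv_eq_mul]
    linarith
  · have hn0 : (0:ℝ) < n := by exact_mod_cast hn
    have hn1 : (1:ℝ) ≤ n := by exact_mod_cast hn
    have h2c : (0:ℝ) < (2:ℝ)^c := Real.rpow_pos_of_pos two_pos c
    have hhalf : ((1:ℝ)/2)^t = ((2:ℝ)^(t:ℝ))⁻¹ := by
      rw [Real.rpow_natCast, div_pow, one_pow, one_div]
    have hsplit : (2:ℝ)^(2*Real.logb 2 n + c) = (n:ℝ)^2 * (2:ℝ)^c := by
      rw [Real.rpow_add two_pos]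
      congr 1
      rw [mul_comm (2:ℝ) (Real.logb 2 n), Real.rpow_mul (by norm_num : (0:ℝ) ≤ 2),
        Real.rpow_logb two_pos (by norm_num) hn0]
      have h22 : ((2:ℕ):ℝ) = (2:ℝ) := by norm_num
      rw [← h22, Real.rpow_natCast]
    have hmono : ((2:ℝ)^(t:ℝ))⁻¹ ≤ ((n:ℝ)^2 * (2:ℝ)^c)⁻¹ := by
      rw [← hsplit]
      apply inv_anti₀ (Real.rpow_pos_of_pos two_pos _)
      exact Real.rpow_le_rpow_of_exponent_le one_le_two ht
    have hfin : 1/(2:ℝ)^(c+1) = ((2:ℝ)^c * 2)⁻¹ := by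
      rw [Real.rpow_add two_pos, Real.rpow_one, one_div]
    have hCnonneg : (0:ℝ) ≤ (n:ℝ) * ((n:ℝ) - 1) / 2 := by nlinarith
    calc (n:ℝ) * ((n:ℝ) - 1) / 2 * ((1:ℝ)/2)^t
        ≤ (n:ℝ) * ((n:ℝ) - 1) / 2 * ((n:ℝ)^2 * (2:ℝ)^c)⁻¹ := by
          rw [hhalf]
          exact mul_le_mul_of_nonneg_left hmono hCnonneg
      _ ≤ 1/(2:ℝ)^(c+1) := by
          rw [hfin]
          have hX : (0:ℝ) < (n:ℝ)^2 * (2:ℝ)^c := by positivity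
          have hY : (0:ℝ) < (2:ℝ)^c * 2 := by positivity
          rw [← div_eq_mul_inv, ← one_div, div_le_div_iff₀ hX hY]
          nlinarith
end

section
/- Suppose a group G acts on R^n preserving a hyperplane arrangement A, acting transitively on the set of chambers, and the face weights w satisfy w(gF) = w(F) for all g ∈ G and faces F. Then the stationary distribution of the BHR chamber walk is the uniform distribution on the chambers. -/
open scoped Classical

/-- The coordinatewise product of sign vectors (faces of a hyperplane arrangement). -/
def faceProd {m : ℕ} (F G : Fin m → SignType) : Fin m → SignType :=
  fun i => if F i ≠ 0 then F i else G i

/-- The chambers: faces of the arrangement all of whose coordinates are nonzero. -/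
abbrev Chamber (m : ℕ) (Faces : Finset (Fin m → SignType)) :=
  {x : Fin m → SignType // x ∈ Faces ∧ ∀ i, x i ≠ 0}

/-- Transition matrix of the BHR walk on chambers. -/
noncomputable def bhrKernel (m : ℕ) (Faces : Finset (Fin m → SignType))
    (w : (Fin m → SignType) → ℝ) :
    Matrix (Chamber m Faces) (Chamber m Faces) ℝ :=
  fun C C' => ∑ F ∈ Faces, if faceProd F C.1 = C'.1 then w F else 0

/-- If a group `G` acts on the arrangement (preserving the set of faces, the face product
and chambers), transitively on the chambers, and the face weights are `G`-invariant, then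
the stationary distribution of the BHR chamber walk is uniform on the chambers. -/
theorem bhr_symmetric_stationary_uniform (m : ℕ) (Faces : Finset (Fin m → SignType))
    (hclosed : ∀ F ∈ Faces, ∀ G ∈ Faces, faceProd F G ∈ Faces)
    (w : (Fin m → SignType) → ℝ) (hw0 : ∀ F, 0 ≤ w F)
    (hsupp : ∀ F, 0 < w F → F ∈ Faces) (hsum : ∑ F ∈ Faces, w F = 1)
    (hsep : ∀ i : Fin m, ∃ F, 0 < w F ∧ F i ≠ 0)
    (G : Type*) [Group G] [MulAction G (Fin m → SignType)]
    (hact_faces : ∀ (g : G) (F : Fin m → SignType), F ∈ Faces → g • F ∈ Faces)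
    (hact_prod : ∀ (g : G) (F F' : Fin m → SignType),
      g • faceProd F F' = faceProd (g • F) (g • F'))
    (hact_ch : ∀ (g : G) (F : Fin m → SignType), (∀ i, (g • F) i ≠ 0) ↔ ∀ i, F i ≠ 0)
    (htrans : ∀ C C' : Chamber m Faces, ∃ g : G, g • C.1 = C'.1)
    (hinv : ∀ (g : G) (F : Fin m → SignType), w (g • F) = w F)
    (π : Chamber m Faces → ℝ) (hπ0 : ∀ C, 0 ≤ π C) (hπsum : ∑ C, π C = 1)
    (hstat : ∀ C, ∑ C', π C' * bhrKernel m Faces w C' C = π C) :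
    ∀ C : Chamber m Faces, π C = 1 / (Fintype.card (Chamber m Faces)) := by
  intro C₀
  classical
  set K := bhrKernel m Faces w with hKdef
  -- basic chamber facts
  have hprod_ne : ∀ (F x : Fin m → SignType), (∀ i, x i ≠ 0) → ∀ i, faceProd F x i ≠ 0 := by
    intro F x hx i
    unfold faceProd
    by_cases h : F i ≠ 0 <;> simp [h, hx i]
  have hstep : ∀ F ∈ Faces, ∀ C : Chamber m Faces,
      faceProd F C.1 ∈ Faces ∧ ∀ i, faceProd F C.1 i ≠ 0 :=
    fun F hF C => ⟨hclosed F hF C.1 C.2.1, hprod_ne F C.1 C.2.2⟩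
  -- nonnegativity of kernel
  have hKnn : ∀ C D : Chamber m Faces, 0 ≤ K C D := by
    intro C D
    rw [hKdef]
    unfold bhrKernel
    refine Finset.sum_nonneg fun F _ => ?_
    split <;> [exact hw0 F; exact le_rfl]
  -- single-term lower bound
  have hKsingle : ∀ F ∈ Faces, ∀ C D : Chamber m Faces, faceProd F C.1 = D.1 → w F ≤ K C D := by
    intro F hF C D h
    rw [hKdef]
    unfold bhrKernel
    have : w F = if faceProd F C.1 = D.1 then w F else 0 := by rw [if_pos h]
    rw [this]
    refine Finset.single_le_sum (f := fun F' => if faceProd F' C.1 = D.1 then w F' else 0)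
      (fun F' _ => ?_) hF
    split <;> [exact hw0 F'; exact le_rfl]
  -- row sums are 1
  have hrow : ∀ C : Chamber m Faces, ∑ D, K C D = 1 := by
    intro C
    rw [hKdef]
    unfold bhrKernel
    rw [Finset.sum_comm, ← hsum]
    refine Finset.sum_congr rfl fun F hF => ?_
    have hiff : ∀ D : Chamber m Faces, (faceProd F C.1 = D.1) ↔
        ((⟨faceProd F C.1, hstep F hF C⟩ : Chamber m Faces) = D) := by
      intro D
      constructor
      · intro h; exact Subtype.ext h
      · intro h; rw [← h]
    calc ∑ D : Chamber m Faces, (if faceProd F C.1 = D.1 then w F else 0)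
        = ∑ D : Chamber m Faces,
            (if (⟨faceProd F C.1, hstep F hF C⟩ : Chamber m Faces) = D then w F else 0) := by
          exact Finset.sum_congr rfl fun D _ => if_congr (hiff D) rfl rfl
      _ = w F := by rw [Finset.sum_ite_eq]; simp
  -- column sums are constant
  have gch : ∀ (g : G) (C : Chamber m Faces), g • C.1 ∈ Faces ∧ ∀ i, (g • C.1) i ≠ 0 :=
    fun g C => ⟨hact_faces g C.1 C.2.1, (hact_ch g C.1).mpr C.2.2⟩
  have hcol_const : ∀ C' C'' : Chamber m Faces, (∑ C, K C C') = ∑ C, K C C'' := by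
    intro C' C''
    obtain ⟨g, hg⟩ := htrans C' C''
    let e : Chamber m Faces ≃ Chamber m Faces :=
      { toFun := fun D => ⟨g • D.1, gch g D⟩
        invFun := fun D => ⟨g⁻¹ • D.1, gch g⁻¹ D⟩
        left_inv := fun D => Subtype.ext (inv_smul_smul g D.1)
        right_inv := fun D => Subtype.ext (smul_inv_smul g D.1) }
    have := Equiv.sum_comp e (fun C => K C C'')
    rw [← this]
    refine Finset.sum_congr rfl fun D _ => ?_
    rw [hKdef]
    unfold bhrKernel
    refine Finset.sum_nbij' (fun F => g • F) (fun F => g⁻¹ • F)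
      (fun F hF => hact_faces g F hF) (fun F hF => by
        have := hact_faces g⁻¹ F hF; exact this)
      (fun F _ => inv_smul_smul g F) (fun F _ => smul_inv_smul g F) ?_
    intro F hF
    have hcond : (faceProd F D.1 = C'.1) ↔ (faceProd (g • F) ((e D).1) = C''.1) := by
      show (faceProd F D.1 = C'.1) ↔ (faceProd (g • F) (g • D.1) = C''.1)
      rw [← hact_prod, ← hg]
      constructor
      · intro h; rw [h]
      · intro h; exact smul_left_cancel g h
    rw [hinv g F]
    by_cases h : faceProd F D.1 = C'.1
    · rw [if_pos h, if_pos (hcond.mp h)]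
    · rw [if_neg h, if_neg (fun hc => h (hcond.mpr hc))]
  -- chambers are nonempty; let n be the number of chambers
  have : Nonempty (Chamber m Faces) := ⟨C₀⟩
  set n := Fintype.card (Chamber m Faces) with hn
  have hnpos : 0 < n := Fintype.card_pos
  have hnne : (n : ℝ) ≠ 0 := Nat.cast_ne_zero.mpr hnpos.ne'
  -- column sums are 1
  have hcol : ∀ C : Chamber m Faces, ∑ D, K D C = 1 := by
    intro C
    have htot : ∑ C' : Chamber m Faces, ∑ D, K D C' = (n : ℝ) := by
      rw [Finset.sum_comm]
      have : ∀ D : Chamber m Faces, ∑ C' : Chamber m Faces, K D C' = 1 := hrow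
      rw [Finset.sum_congr rfl fun D _ => this D]
      simp [hn]
    have hconst : ∑ C' : Chamber m Faces, ∑ D, K D C' = (n : ℝ) * ∑ D, K D C := by
      rw [Finset.sum_congr rfl fun C' _ => hcol_const C' C]
      simp [hn, Finset.sum_const, nsmul_eq_mul]
    have := hconst.symm.trans htot
    field_simp at this
    exact this
  -- nonnegativity and row sums of powers
  have hpow_nn : ∀ (k : ℕ) (C D : Chamber m Faces), 0 ≤ (K ^ k) C D := by
    intro k
    induction k with
    | zero =>
      intro C D
      rw [pow_zero]
      rw [Matrix.one_apply]
      split <;> norm_num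
    | succ k ih =>
      intro C D
      rw [pow_succ, Matrix.mul_apply]
      exact Finset.sum_nonneg fun E _ => mul_nonneg (ih C E) (hKnn E D)
  have hpow_row : ∀ (k : ℕ) (C : Chamber m Faces), ∑ D, (K ^ k) C D = 1 := by
    intro k
    induction k with
    | zero =>
      intro C
      simp [Matrix.one_apply]
    | succ k ih =>
      intro C
      have : ∀ D : Chamber m Faces, (K ^ (k+1)) C D = ∑ E, (K ^ k) C E * K E D := by
        intro D; rw [pow_succ, Matrix.mul_apply]
      rw [Finset.sum_congr rfl fun D _ => this D, Finset.sum_comm]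
      have : ∀ E : Chamber m Faces, ∑ D, (K ^ k) C E * K E D = (K ^ k) C E := by
        intro E; rw [← Finset.mul_sum, hrow E, mul_one]
      rw [Finset.sum_congr rfl fun E _ => this E, ih C]
  -- stationarity propagates to powers
  have gen : ∀ v : Chamber m Faces → ℝ, (∀ C, ∑ C', v C' * K C' C = v C) →
      ∀ (k : ℕ) (C : Chamber m Faces), ∑ C', v C' * (K ^ k) C' C = v C := by
    intro v hv k
    induction k with
    | zero =>
      intro C
      simp [Matrix.one_apply]
    | succ k ih =>
      intro C
      have h1 : ∀ C' : Chamber m Faces, v C' * (K ^ (k+1)) C' C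
          = ∑ D, v C' * ((K ^ k) C' D * K D C) := by
        intro C'
        rw [pow_succ, Matrix.mul_apply, Finset.mul_sum]
      rw [Finset.sum_congr rfl fun C' _ => h1 C', Finset.sum_comm]
      have h2 : ∀ D : Chamber m Faces, ∑ C', v C' * ((K ^ k) C' D * K D C)
          = (∑ C', v C' * (K ^ k) C' D) * K D C := by
        intro D
        rw [Finset.sum_mul]
        exact Finset.sum_congr rfl fun C' _ => by ring
      rw [Finset.sum_congr rfl fun D _ => h2 D]
      rw [Finset.sum_congr rfl fun D _ => by rw [ih D]]
      exact hv C
  -- foldr facts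
  have app_mem : ∀ (L : List (Fin m → SignType)), (∀ F ∈ L, F ∈ Faces) →
      ∀ x, x ∈ Faces → L.foldr faceProd x ∈ Faces := by
    intro L
    induction L with
    | nil => intro _ x hx; exact hx
    | cons F t ih =>
      intro hL x hx
      exact hclosed F (hL F (List.mem_cons_self)) _
        (ih (fun F' hF' => hL F' (List.mem_cons_of_mem F hF')) x hx)
  have app_ne : ∀ (L : List (Fin m → SignType)) (x : Fin m → SignType),
      (∀ i, x i ≠ 0) → ∀ i, L.foldr faceProd x i ≠ 0 := by
    intro L
    induction L with
    | nil => intro x hx; exact hx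
    | cons F t ih =>
      intro x hx i
      exact hprod_ne F _ (ih x hx) i
  have app_indep : ∀ (L : List (Fin m → SignType)) (x y : Fin m → SignType) (i : Fin m),
      (∃ F ∈ L, F i ≠ 0) → L.foldr faceProd x i = L.foldr faceProd y i := by
    intro L
    induction L with
    | nil => intro x y i h; obtain ⟨F, hF, _⟩ := h; exact absurd hF (List.not_mem_nil)
    | cons F t ih =>
      intro x y i h
      show faceProd F (t.foldr faceProd x) i = faceProd F (t.foldr faceProd y) i
      unfold faceProd
      by_cases hF : F i ≠ 0
      · simp [hF]
      · simp only [hF, if_neg]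
        obtain ⟨F', hF', hne⟩ := h
        rcases List.mem_cons.mp hF' with rfl | hmem
        · exact absurd hne hF
        · simp only [ne_eq, hF, not_true_eq_false, if_false] at *
          exact ih x y i ⟨F', hmem, hne⟩
  -- the separating faces
  have hFc : ∀ i : Fin m, 0 < w ((hsep i).choose) ∧ (hsep i).choose i ≠ 0 :=
    fun i => (hsep i).choose_spec
  set Fc : Fin m → (Fin m → SignType) := fun i => (hsep i).choose with hFcdef
  have hFcFaces : ∀ i, Fc i ∈ Faces := fun i => hsupp _ (hFc i).1
  set L : List (Fin m → SignType) := List.ofFn Fc with hLdef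
  have hLFaces : ∀ F ∈ L, F ∈ Faces := by
    intro F hF
    obtain ⟨i, rfl⟩ := List.mem_ofFn.mp hF
    exact hFcFaces i
  set δ : ℝ := ∏ i, w (Fc i) with hδdef
  have hδpos : 0 < δ := Finset.prod_pos fun i _ => (hFc i).1
  -- the absorbing chamber
  set P : Chamber m Faces := ⟨L.foldr faceProd C₀.1,
    app_mem L hLFaces C₀.1 C₀.2.1, app_ne L C₀.1 C₀.2.2⟩ with hPdef
  have hPuniv : ∀ D : Chamber m Faces, L.foldr faceProd D.1 = P.1 := by
    intro D
    funext i
    exact app_indep L D.1 C₀.1 i ⟨Fc i, List.mem_ofFn.mpr ⟨i, rfl⟩, (hFc i).2⟩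
  -- minorization
  have hmin : ∀ (L' : List (Fin m → SignType)), (∀ F ∈ L', F ∈ Faces) →
      ∀ (C D : Chamber m Faces), D.1 = L'.foldr faceProd C.1 →
      (L'.map w).prod ≤ (K ^ L'.length) C D := by
    intro L'
    induction L' with
    | nil =>
      intro _ C D h
      have : D = C := Subtype.ext h
      subst this
      simp [Matrix.one_apply]
    | cons F t ih =>
      intro hL' C D h
      have htF : ∀ F' ∈ t, F' ∈ Faces := fun F' hF' => hL' F' (List.mem_cons_of_mem F hF')
      have hFf : F ∈ Faces := hL' F (List.mem_cons_self)
      set E : Chamber m Faces := ⟨t.foldr faceProd C.1,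
        app_mem t htF C.1 C.2.1, app_ne t C.1 C.2.2⟩ with hEdef
      have hIH : (t.map w).prod ≤ (K ^ t.length) C E := ih htF C E rfl
      have hKED : w F ≤ K E D := hKsingle F hFf E D h.symm
      have hprodnn : (0:ℝ) ≤ (t.map w).prod := by
        apply List.prod_nonneg
        intro a ha
        obtain ⟨F', _, rfl⟩ := List.mem_map.mp ha
        exact hw0 F'
      have hlen : (F :: t).length = t.length + 1 := rfl
      rw [hlen, pow_succ, Matrix.mul_apply]
      have hterm : (t.map w).prod * w F ≤ (K ^ t.length) C E * K E D :=
        mul_le_mul hIH hKED (hw0 F) (le_trans hprodnn hIH)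
      have hsingle : (K ^ t.length) C E * K E D ≤ ∑ X, (K ^ t.length) C X * K X D :=
        Finset.single_le_sum (fun X _ => mul_nonneg (hpow_nn _ C X) (hKnn X D))
          (Finset.mem_univ E)
      calc ((F :: t).map w).prod = w F * (t.map w).prod := by simp
        _ = (t.map w).prod * w F := mul_comm _ _
        _ ≤ (K ^ t.length) C E * K E D := hterm
        _ ≤ ∑ X, (K ^ t.length) C X * K X D := hsingle
  have hMminor : ∀ D : Chamber m Faces, δ ≤ (K ^ m) D P := by
    intro D
    have hlen : L.length = m := by rw [hLdef, List.length_ofFn]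
    have hprod : (L.map w).prod = δ := by
      rw [hLdef, List.map_ofFn, List.prod_ofFn]
      rfl
    have := hmin L hLFaces D P (hPuniv D).symm
    rw [hlen, hprod] at this
    exact this
  -- uniform distribution
  set u : Chamber m Faces → ℝ := fun _ => 1 / (n : ℝ) with hudef
  have hustat : ∀ C, ∑ C', u C' * K C' C = u C := by
    intro C
    rw [hudef]
    simp only
    rw [← Finset.mul_sum, hcol C, mul_one]
  have husum : ∑ C, u C = 1 := by
    rw [hudef]
    simp [Finset.sum_const, nsmul_eq_mul, hn]
  -- the difference
  set μ : Chamber m Faces → ℝ := fun C => π C - u C with hμdef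
  have hμsum : ∑ C, μ C = 0 := by
    rw [hμdef]
    simp only
    rw [Finset.sum_sub_distrib, hπsum, husum, sub_self]
  have hμM : ∀ C, ∑ C', μ C' * (K ^ m) C' C = μ C := by
    intro C
    rw [hμdef]
    simp only [sub_mul]
    rw [Finset.sum_sub_distrib, gen π hstat m C, gen u hustat m C]
  -- subtracted kernel
  set M' : Chamber m Faces → Chamber m Faces → ℝ :=
    fun C' C => (K ^ m) C' C - (if C = P then δ else 0) with hM'def
  have hM'nn : ∀ C' C, 0 ≤ M' C' C := by
    intro C' C
    rw [hM'def]
    simp only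
    by_cases h : C = P
    · rw [if_pos h, sub_nonneg, h]; exact hMminor C'
    · rw [if_neg h, sub_zero]; exact hpow_nn m C' C
  have hM'row : ∀ C', ∑ C, M' C' C = 1 - δ := by
    intro C'
    rw [hM'def]
    simp only
    rw [Finset.sum_sub_distrib, hpow_row m C']
    congr 1
    rw [Finset.sum_ite_eq']
    simp
  have hμM' : ∀ C, ∑ C', μ C' * M' C' C = μ C := by
    intro C
    rw [hM'def]
    simp only [mul_sub]
    rw [Finset.sum_sub_distrib, hμM C, ← Finset.sum_mul, hμsum, zero_mul, sub_zero]
  -- contraction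
  set S : ℝ := ∑ C, |μ C| with hSdef
  have hSnn : 0 ≤ S := Finset.sum_nonneg fun C _ => abs_nonneg _
  have hcontr : S ≤ (1 - δ) * S := by
    calc S = ∑ C, |∑ C', μ C' * M' C' C| := by
          rw [hSdef]
          exact Finset.sum_congr rfl fun C _ => by rw [hμM' C]
      _ ≤ ∑ C, ∑ C', |μ C' * M' C' C| :=
          Finset.sum_le_sum fun C _ => Finset.abs_sum_le_sum_abs _ _
      _ = ∑ C, ∑ C', |μ C'| * M' C' C := by
          refine Finset.sum_congr rfl fun C _ => Finset.sum_congr rfl fun C' _ => ?_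
          rw [abs_mul, abs_of_nonneg (hM'nn C' C)]
      _ = ∑ C', |μ C'| * ∑ C, M' C' C := by
          rw [Finset.sum_comm]
          exact Finset.sum_congr rfl fun C' _ => by rw [Finset.mul_sum]
      _ = ∑ C', |μ C'| * (1 - δ) := Finset.sum_congr rfl fun C' _ => by rw [hM'row C']
      _ = (1 - δ) * S := by rw [hSdef, ← Finset.sum_mul, mul_comm]
  have hS0 : S = 0 := by
    have h2 : (1 - δ) * S = S - δ * S := by ring
    rw [h2] at hcontr
    have h3 : δ * S ≤ 0 := by linarith
    have h4 : 0 ≤ δ * S := mul_nonneg hδpos.le hSnn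
    have h5 : δ * S = 0 := le_antisymm h3 h4
    exact (mul_eq_zero.mp h5).resolve_left hδpos.ne'
  have hμzero : ∀ C, μ C = 0 := by
    intro C
    have := (Finset.sum_eq_zero_iff_of_nonneg (fun C _ => abs_nonneg (μ C))).mp hS0 C
      (Finset.mem_univ C)
    exact abs_eq_zero.mp this
  have := hμzero C₀
  rw [hμdef] at this
  simp only at this
  have : π C₀ = u C₀ := by linarith [this]
  rw [this, hudef]
end

section
/- Under the symmetry conditions (a group G preserving the arrangement, transitive on chambers, with G-invariant face weights), the first time T_3 that the product F^t F^{t-1} ⋯ F^1 of the sampled faces is a chamber is a strong stationary time for the BHR walk, and consequently s(t) ≤ Σ_{i=1}^m (1 − Σ_{F ⊄ H_i} w(F))^t, summing over the m hyperplanes H_i of the arrangement. -/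
open MeasureTheory
open scoped ENNReal Classical

instance (m : ℕ) : MeasurableSpace (Fin m → SignType) := ⊤

namespace BHRAux

variable {m : ℕ}

lemma faceProd_assoc (a b c : Fin m → SignType) :
    faceProd (faceProd a b) c = faceProd a (faceProd b c) := by
  funext i
  simp only [faceProd]
  by_cases ha : a i = 0 <;> by_cases hb : b i = 0 <;> simp [ha, hb]

lemma faceProd_zero_right (a : Fin m → SignType) :
    faceProd a (fun _ => 0) = a := by
  funext i; simp only [faceProd]; by_cases h : a i = 0 <;> simp [h]

lemma faceProd_zero_left (a : Fin m → SignType) :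
    faceProd (fun _ => 0) a = a := by
  funext i; simp [faceProd]

lemma faceProd_eq_left {a : Fin m → SignType} (h : ∀ i, a i ≠ 0) (b : Fin m → SignType) :
    faceProd a b = a := by
  funext i; simp [faceProd, h i]

/-- The product `f (t-1) ⋯ f 0` of a tuple of faces (with the convention that the empty
product is the zero sign vector, the unit of the face semigroup). -/
def tupleProd : ∀ {t : ℕ}, (Fin t → (Fin m → SignType)) → (Fin m → SignType)
  | 0, _ => fun _ => 0
  | (t+1), f => faceProd (f (Fin.last t)) (tupleProd (fun s : Fin t => f s.castSucc))

end BHRAux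

open BHRAux

/-- Under the symmetry conditions (a group `G` preserving the arrangement and the face
weights, acting transitively on the chambers, so that the stationary distribution is
uniform on chambers), the first time `T₃` that the product `F^t ⋯ F^1` of the sampled
faces is a chamber is a strong stationary time for the BHR walk, and consequently
`s(t) ≤ ∑_{i=1}^m (1 - ∑_{F ⊄ H_i} w(F))^t`, summing over the `m` hyperplanes. -/
theorem bhr_symmetric_sst_and_separation (m : ℕ) (Faces : Finset (Fin m → SignType))
    (hclosed : ∀ F ∈ Faces, ∀ G ∈ Faces, faceProd F G ∈ Faces)
    (w : (Fin m → SignType) → ℝ) (hw0 : ∀ F, 0 ≤ w F)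
    (hsupp : ∀ F, 0 < w F → F ∈ Faces) (hsum : ∑ F ∈ Faces, w F = 1)
    (hsep : ∀ i : Fin m, ∃ F, 0 < w F ∧ F i ≠ 0)
    (G : Type*) [Group G] [MulAction G (Fin m → SignType)]
    (hact_faces : ∀ (g : G) (F : Fin m → SignType), F ∈ Faces → g • F ∈ Faces)
    (hact_prod : ∀ (g : G) (F F' : Fin m → SignType),
      g • faceProd F F' = faceProd (g • F) (g • F'))
    (hact_ch : ∀ (g : G) (F : Fin m → SignType), (∀ i, (g • F) i ≠ 0) ↔ ∀ i, F i ≠ 0)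
    (htrans : ∀ C C' : Chamber m Faces, ∃ g : G, g • C.1 = C'.1)
    (hinv : ∀ (g : G) (F : Fin m → SignType), w (g • F) = w F)
    {Ω : Type*} [MeasurableSpace Ω] (μ : Measure Ω) [IsProbabilityMeasure μ]
    (D : ℕ → Ω → (Fin m → SignType)) (hmeas : ∀ t, Measurable (D t))
    (hindep : ProbabilityTheory.iIndepFun D μ)
    (hdist : ∀ (t : ℕ) (F : Fin m → SignType), μ {ω | D t ω = F} = ENNReal.ofReal (w F))
    (C₀ : Chamber m Faces) (X : ℕ → Ω → (Fin m → SignType))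
    (hX0 : X 0 = fun _ => C₀.1)
    (hXstep : ∀ (t : ℕ) (ω : Ω), X (t + 1) ω = faceProd (D t ω) (X t ω))
    -- `P t ω` is the product `F^t F^{t-1} ⋯ F^1` of the faces sampled so far
    (P : ℕ → Ω → (Fin m → SignType)) (hP0 : P 0 = fun _ _ => (0 : SignType))
    (hPstep : ∀ (t : ℕ) (ω : Ω), P (t + 1) ω = faceProd (D t ω) (P t ω)) :
    (∀ (t : ℕ) (C : Chamber m Faces),
      μ {ω | X t ω = C.1 ∧ ∀ i, P t ω i ≠ 0}
        = (Fintype.card (Chamber m Faces) : ℝ≥0∞)⁻¹ * μ {ω | ∀ i, P t ω i ≠ 0}) ∧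
    (∀ (t : ℕ) (C : Chamber m Faces),
      1 - (Fintype.card (Chamber m Faces) : ℝ≥0∞) * μ {ω | X t ω = C.1}
        ≤ ENNReal.ofReal
            (∑ i : Fin m, (1 - ∑ F ∈ Faces.filter (fun F => F i ≠ 0), w F) ^ t)) := by
  classical
  have hms : ∀ s : Set (Fin m → SignType), MeasurableSet s := fun _ => trivial
  set W : (Fin m → SignType) → ℝ≥0∞ := fun F => ENNReal.ofReal (w F) with hW
  -- P as a function of the D's
  have hPt : ∀ (t : ℕ) (ω : Ω), P t ω = tupleProd (fun s : Fin t => D s ω) := by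
    intro t
    induction t with
    | zero => intro ω; rw [hP0]; rfl
    | succ t ih =>
      intro ω
      rw [hPstep, ih ω]
      rfl
  -- measurability of P
  have hPmeas : ∀ t, Measurable (P t) := by
    intro t
    induction t with
    | zero => rw [hP0]; exact measurable_const
    | succ t ih =>
      have he : P (t+1) = fun ω => faceProd (D t ω) (P t ω) := funext (hPstep t)
      rw [he]
      apply measurable_to_countable'
      intro c
      have : (fun ω => faceProd (D t ω) (P t ω)) ⁻¹' {c}
          = ⋃ a : (Fin m → SignType), (D t ⁻¹' {a} ∩ P t ⁻¹' {b | faceProd a b = c}) := by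
        ext ω
        simp only [Set.mem_preimage, Set.mem_singleton_iff, Set.mem_iUnion, Set.mem_inter_iff,
          Set.mem_setOf_eq]
        constructor
        · intro h; exact ⟨D t ω, rfl, h⟩
        · rintro ⟨a, rfl, h⟩; exact h
      rw [this]
      exact MeasurableSet.iUnion fun a => ((hmeas t) (hms _)).inter (ih (hms _))
  -- X in terms of P
  have hXP : ∀ (t : ℕ) (ω : Ω), X t ω = faceProd (P t ω) C₀.1 := by
    intro t
    induction t with
    | zero => intro ω; rw [hX0, hP0]; exact (faceProd_zero_left _).symm
    | succ t ih =>
      intro ω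
      rw [hXstep, hPstep, ih ω, ← faceProd_assoc]
  -- probability of a finite intersection of D-events
  have hInter : ∀ (t : ℕ) (f : Fin t → (Fin m → SignType)),
      μ (⋂ s : Fin t, D s ⁻¹' {f s}) = ∏ s : Fin t, W (f s) := by
    intro t f
    set f' : ℕ → (Fin m → SignType) := fun n => if h : n < t then f ⟨n, h⟩ else fun _ => 0 with hf'
    have h1 : (⋂ s : Fin t, D s ⁻¹' {f s}) = ⋂ n ∈ Finset.range t, D n ⁻¹' {f' n} := by
      ext ω
      simp only [Set.mem_iInter, Set.mem_preimage, Set.mem_singleton_iff, Finset.mem_range]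
      constructor
      · intro h n hn
        have := h ⟨n, hn⟩
        simpa [hf', hn] using this
      · intro h s
        have := h s s.isLt
        simpa [hf', s.isLt] using this
    rw [h1, hindep.meas_biInter (fun i _ => ⟨{f' i}, trivial, rfl⟩)]
    have h2 : ∀ n ∈ Finset.range t, μ (D n ⁻¹' {f' n}) = W (f' n) := by
      intro n _
      have : D n ⁻¹' {f' n} = {ω | D n ω = f' n} := rfl
      rw [this, hdist]
    rw [Finset.prod_congr rfl h2]
    rw [← Fin.prod_univ_eq_prod_range (fun n => W (f' n)) t]
    refine Finset.prod_congr rfl fun s _ => ?_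
    simp [hf', s.isLt]
  -- probability that P t equals a given sign vector
  have hPeq : ∀ (t : ℕ) (x : (Fin m → SignType)), μ {ω | P t ω = x}
      = ∑ f ∈ Finset.univ.filter (fun f : Fin t → (Fin m → SignType) => tupleProd f = x),
          ∏ s : Fin t, W (f s) := by
    intro t x
    have hset : {ω | P t ω = x}
        = ⋃ f ∈ Finset.univ.filter (fun f : Fin t → (Fin m → SignType) => tupleProd f = x),
            ⋂ s : Fin t, D s ⁻¹' {f s} := by
      ext ω
      simp only [Set.mem_setOf_eq, Set.mem_iUnion, Finset.mem_filter, Finset.mem_univ, true_and,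
        Set.mem_iInter, Set.mem_preimage, Set.mem_singleton_iff]
      constructor
      · intro h
        exact ⟨fun s => D s ω, by rw [← hPt t ω, h], fun s => rfl⟩
      · rintro ⟨f, hf, hfs⟩
        rw [hPt t ω]
        have : (fun s : Fin t => D s ω) = f := funext hfs
        rw [this, hf]
    have hdisj : (↑(Finset.univ.filter (fun f : Fin t → (Fin m → SignType) => tupleProd f = x)) : Set (Fin t → (Fin m → SignType))).PairwiseDisjoint
        (fun f => ⋂ s : Fin t, D s ⁻¹' {f s}) := by
      intro f _ g _ hfg
      refine Set.disjoint_left.2 fun ω hω hω' => hfg ?_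
      simp only [Set.mem_iInter, Set.mem_preimage, Set.mem_singleton_iff] at hω hω'
      exact funext fun s => (hω s).symm.trans (hω' s)
    rw [hset, measure_biUnion_finset hdisj (fun f _ => MeasurableSet.iInter fun s => (hmeas s) (hms _))]
    exact Finset.sum_congr rfl fun f _ => hInter t f
  -- the action fixes the zero vector
  have hsmul0 : ∀ g : G, g • (fun _ => (0 : SignType) : (Fin m → SignType)) = fun _ => 0 := by
    intro g
    funext i
    by_contra hi
    have h1 := hact_prod g (fun _ => 0) (g⁻¹ • (fun _ => (0 : SignType) : (Fin m → SignType)))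
    rw [faceProd_zero_left, smul_inv_smul] at h1
    have h2 := congrFun h1 i
    simp only [faceProd, hi, ne_eq, not_false_eq_true, if_true] at h2
    exact hi h2.symm
  -- equivariance of tupleProd
  have hequiv : ∀ (t : ℕ) (g : G) (f : Fin t → (Fin m → SignType)),
      tupleProd (fun s => g • f s) = g • tupleProd f := by
    intro t g
    induction t with
    | zero => intro f; exact (hsmul0 g).symm
    | succ t ih =>
      intro f
      show faceProd (g • f (Fin.last t)) (tupleProd fun s : Fin t => g • f s.castSucc)
          = g • faceProd (f (Fin.last t)) (tupleProd fun s : Fin t => f s.castSucc)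
      rw [hact_prod, ih (fun s => f s.castSucc)]
  -- symmetry: the chance that P t equals a chamber is chamber-independent
  have hsymm : ∀ (t : ℕ) (C C' : Chamber m Faces),
      μ {ω | P t ω = C.1} = μ {ω | P t ω = C'.1} := by
    intro t C C'
    obtain ⟨g, hg⟩ := htrans C C'
    rw [hPeq, hPeq]
    refine Finset.sum_nbij' (fun f => fun s => g • f s) (fun f => fun s => g⁻¹ • f s)
      ?_ ?_ ?_ ?_ ?_
    · intro f hf
      simp only [Finset.mem_filter, Finset.mem_univ, true_and] at hf ⊢
      rw [hequiv, hf, hg]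
    · intro f hf
      simp only [Finset.mem_filter, Finset.mem_univ, true_and] at hf ⊢
      rw [hequiv, hf, ← hg, inv_smul_smul]
    · intro f _; funext s; exact inv_smul_smul g (f s)
    · intro f _; funext s; exact smul_inv_smul g (f s)
    · intro f _
      refine Finset.prod_congr rfl fun s _ => ?_
      simp [hW, hinv]
  -- products of faces are faces (or zero)
  have hmemF : ∀ (t : ℕ) (f : Fin t → (Fin m → SignType)), (∀ s, f s ∈ Faces) →
      tupleProd f ∈ Faces ∨ tupleProd f = (fun _ => 0) := by
    intro t
    induction t with
    | zero => intro f _; right; rfl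
    | succ t ih =>
      intro f hf
      rcases ih (fun s => f s.castSucc) (fun s => hf _) with h | h
      · left; exact hclosed _ (hf _) _ h
      · left
        show faceProd (f (Fin.last t)) (tupleProd fun s : Fin t => f s.castSucc) ∈ Faces
        rw [h, faceProd_zero_right]
        exact hf _
  -- P t lands outside Faces (on all-nonzero vectors) with probability zero
  have hP_notFace : ∀ (t : ℕ) (x : (Fin m → SignType)), x ∉ Faces → (∀ i, x i ≠ 0) →
      μ {ω | P t ω = x} = 0 := by
    intro t x hx hnz
    rw [hPeq]
    apply Finset.sum_eq_zero
    intro f hf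
    simp only [Finset.mem_filter, Finset.mem_univ, true_and] at hf
    by_cases hall : ∀ s, f s ∈ Faces
    · exfalso
      rcases hmemF t f hall with h | h
      · rw [hf] at h; exact hx h
      · rw [hf] at h
        apply hx
        have : x = C₀.1 := funext fun i => absurd (congrFun h i) (hnz i)
        rw [this]; exact C₀.2.1
    · push_neg at hall
      obtain ⟨s, hs⟩ := hall
      have hws : w (f s) = 0 := by
        rcases lt_or_eq_of_le (hw0 (f s)) with h | h
        · exact absurd (hsupp _ h) hs
        · exact h.symm
      apply Finset.prod_eq_zero (Finset.mem_univ s)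
      simp [hW, hws]
  -- decomposition of the "P t is a chamber" event
  have hcard : ∀ t : ℕ, μ {ω | ∀ i, P t ω i ≠ 0}
      = ∑ C : Chamber m Faces, μ {ω | P t ω = C.1} := by
    intro t
    have hset : {ω | ∀ i, P t ω i ≠ 0}
        = ⋃ x ∈ Finset.univ.filter (fun x : (Fin m → SignType) => ∀ i, x i ≠ 0),
            {ω | P t ω = x} := by
      ext ω
      simp only [Set.mem_setOf_eq, Set.mem_iUnion, Finset.mem_filter, Finset.mem_univ, true_and]
      constructor
      · intro h; exact ⟨P t ω, h, rfl⟩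
      · rintro ⟨x, hx, rfl⟩; exact hx
    have hdisj : (↑(Finset.univ.filter (fun x : (Fin m → SignType) => ∀ i, x i ≠ 0)) :
        Set (Fin m → SignType)).PairwiseDisjoint (fun x => {ω | P t ω = x}) := by
      intro x _ y _ hxy
      refine Set.disjoint_left.2 fun ω hω hω' => hxy ?_
      simp only [Set.mem_setOf_eq] at hω hω'
      exact hω.symm.trans hω'
    rw [hset, measure_biUnion_finset hdisj (fun x _ => hPmeas t (hms {y | y = x}))]
    rw [← Finset.sum_subtype
        (Finset.univ.filter (fun x : (Fin m → SignType) => x ∈ Faces ∧ ∀ i, x i ≠ 0))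
        (fun x => by simp) (fun x => μ {ω | P t ω = x})]
    symm
    apply Finset.sum_subset
    · intro x hx
      simp only [Finset.mem_filter, Finset.mem_univ, true_and] at hx ⊢
      exact hx.2
    · intro x hx hx'
      simp only [Finset.mem_filter, Finset.mem_univ, true_and, not_and] at hx hx'
      exact hP_notFace t x (fun hF => hx' hF hx) hx
  -- the SST event equals {P t = C}
  have hE : ∀ (t : ℕ) (C : Chamber m Faces),
      {ω | X t ω = C.1 ∧ ∀ i, P t ω i ≠ 0} = {ω | P t ω = C.1} := by
    intro t C
    ext ω
    simp only [Set.mem_setOf_eq]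
    constructor
    · rintro ⟨h1, h2⟩
      rw [hXP t ω, faceProd_eq_left h2] at h1
      exact h1
    · intro h
      have h2 : ∀ i, P t ω i ≠ 0 := fun i => h ▸ C.2.2 i
      exact ⟨by rw [hXP t ω, faceProd_eq_left h2, h], h2⟩
  have hcard0 : (Fintype.card (Chamber m Faces) : ℝ≥0∞) ≠ 0 := by
    have : Nonempty (Chamber m Faces) := ⟨C₀⟩
    exact Nat.cast_ne_zero.2 Fintype.card_ne_zero
  have hcardtop : (Fintype.card (Chamber m Faces) : ℝ≥0∞) ≠ ⊤ := ENNReal.natCast_ne_top _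
  -- Part 1
  have part1 : ∀ (t : ℕ) (C : Chamber m Faces),
      μ {ω | X t ω = C.1 ∧ ∀ i, P t ω i ≠ 0}
        = (Fintype.card (Chamber m Faces) : ℝ≥0∞)⁻¹ * μ {ω | ∀ i, P t ω i ≠ 0} := by
    intro t C
    rw [hE t C, hcard t]
    rw [Finset.sum_congr rfl (fun C' _ => hsymm t C' C), Finset.sum_const, Finset.card_univ,
      nsmul_eq_mul, ← mul_assoc, ENNReal.inv_mul_cancel hcard0 hcardtop, one_mul]
  refine ⟨part1, ?_⟩
  -- Part 2
  intro t C
  -- the total mass of w is 1 and coordinatewise sums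
  have hsum_univ : ∑ F : (Fin m → SignType), w F = 1 := by
    rw [← hsum]
    symm
    apply Finset.sum_subset (Finset.subset_univ Faces)
    intro x _ hx
    rcases lt_or_eq_of_le (hw0 x) with h | h
    · exact absurd (hsupp _ h) hx
    · exact h.symm
  have hwi : ∀ i : Fin m,
      ∑ F ∈ Finset.univ.filter (fun F : (Fin m → SignType) => F i = 0), w F
        = 1 - ∑ F ∈ Faces.filter (fun F => F i ≠ 0), w F := by
    intro i
    have h1 : ∑ F ∈ Finset.univ.filter (fun F : (Fin m → SignType) => F i = 0), w F
        + ∑ F ∈ Finset.univ.filter (fun F : (Fin m → SignType) => ¬ F i = 0), w F = 1 := by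
      rw [Finset.sum_filter_add_sum_filter_not, hsum_univ]
    have h2 : ∑ F ∈ Finset.univ.filter (fun F : (Fin m → SignType) => ¬ F i = 0), w F
        = ∑ F ∈ Faces.filter (fun F => F i ≠ 0), w F := by
      symm
      apply Finset.sum_subset
      · intro x hx
        simp only [Finset.mem_filter] at hx ⊢
        exact ⟨Finset.mem_univ x, hx.2⟩
      · intro x hx hx'
        simp only [Finset.mem_filter, Finset.mem_univ, true_and] at hx hx'
        rcases lt_or_eq_of_le (hw0 x) with h | h
        · exact absurd ⟨hsupp _ h, hx⟩ hx'
        · exact h.symm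
    rw [h2] at h1
    linarith
  -- probability that coordinate i of P t is zero
  have hPi0 : ∀ i : Fin m, μ {ω | P t ω i = 0}
      = ENNReal.ofReal ((1 - ∑ F ∈ Faces.filter (fun F => F i ≠ 0), w F) ^ t) := by
    intro i
    have hwi0 : (0:ℝ) ≤ 1 - ∑ F ∈ Faces.filter (fun F => F i ≠ 0), w F := by
      rw [← hwi i]
      exact Finset.sum_nonneg fun x _ => hw0 x
    have hset : ∀ u : ℕ, {ω | P u ω i = 0}
        = ⋂ n ∈ Finset.range u, D n ⁻¹' {x : (Fin m → SignType) | x i = 0} := by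
      intro u
      induction u with
      | zero => ext ω; simp [hP0]
      | succ u ih =>
        have hstep : {ω | P (u+1) ω i = 0}
            = (D u ⁻¹' {x : (Fin m → SignType) | x i = 0}) ∩ {ω | P u ω i = 0} := by
          ext ω
          simp only [Set.mem_setOf_eq, Set.mem_inter_iff, Set.mem_preimage]
          rw [hPstep]
          simp only [faceProd]
          by_cases h : D u ω i = 0 <;> simp [h]
        rw [hstep, ih, Finset.range_add_one, Finset.set_biInter_insert]
    have hone : ∀ n : ℕ, μ (D n ⁻¹' {x : (Fin m → SignType) | x i = 0})
        = ENNReal.ofReal (1 - ∑ F ∈ Faces.filter (fun F => F i ≠ 0), w F) := by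
      intro n
      have hU : D n ⁻¹' {x : (Fin m → SignType) | x i = 0}
          = ⋃ F ∈ Finset.univ.filter (fun F : (Fin m → SignType) => F i = 0),
              {ω | D n ω = F} := by
        ext ω
        simp only [Set.mem_preimage, Set.mem_setOf_eq, Set.mem_iUnion, Finset.mem_filter,
          Finset.mem_univ, true_and]
        constructor
        · intro h; exact ⟨D n ω, h, rfl⟩
        · rintro ⟨F, hF, rfl⟩; exact hF
      have hdisj : (↑(Finset.univ.filter (fun F : (Fin m → SignType) => F i = 0)) :
          Set (Fin m → SignType)).PairwiseDisjoint (fun F => {ω | D n ω = F}) := by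
        intro x _ y _ hxy
        refine Set.disjoint_left.2 fun ω hω hω' => hxy ?_
        simp only [Set.mem_setOf_eq] at hω hω'
        exact hω.symm.trans hω'
      rw [hU, measure_biUnion_finset hdisj (fun F _ => (hmeas n) (hms {y | y = F}))]
      rw [← hwi i, ENNReal.ofReal_sum_of_nonneg (fun F _ => hw0 F)]
      exact Finset.sum_congr rfl fun F _ => hdist n F
    rw [hset t, hindep.meas_biInter
      (fun n _ => ⟨{x : (Fin m → SignType) | x i = 0}, trivial, rfl⟩)]
    rw [Finset.prod_congr rfl (fun n _ => hone n), Finset.prod_const, Finset.card_range]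
    rw [ENNReal.ofReal_pow hwi0]
  -- putting everything together
  have hkey := part1 t C
  rw [hE t C] at hkey
  have hmono : μ {ω | P t ω = C.1} ≤ μ {ω | X t ω = C.1} := by
    rw [← hE t C]
    exact measure_mono fun ω hω => hω.1
  have h3 : μ {ω | ∀ i, P t ω i ≠ 0}
      ≤ (Fintype.card (Chamber m Faces) : ℝ≥0∞) * μ {ω | X t ω = C.1} := by
    calc μ {ω | ∀ i, P t ω i ≠ 0}
        = (Fintype.card (Chamber m Faces) : ℝ≥0∞)
          * ((Fintype.card (Chamber m Faces) : ℝ≥0∞)⁻¹ * μ {ω | ∀ i, P t ω i ≠ 0}) := by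
          rw [← mul_assoc, ENNReal.mul_inv_cancel hcard0 hcardtop, one_mul]
      _ = (Fintype.card (Chamber m Faces) : ℝ≥0∞) * μ {ω | P t ω = C.1} := by rw [← hkey]
      _ ≤ (Fintype.card (Chamber m Faces) : ℝ≥0∞) * μ {ω | X t ω = C.1} :=
          mul_le_mul_right hmono _
  have h4 : 1 - (Fintype.card (Chamber m Faces) : ℝ≥0∞) * μ {ω | X t ω = C.1}
      ≤ 1 - μ {ω | ∀ i, P t ω i ≠ 0} := tsub_le_tsub_left h3 1
  have h5 : (1 : ℝ≥0∞) - μ {ω | ∀ i, P t ω i ≠ 0} = μ {ω | ∀ i, P t ω i ≠ 0}ᶜ := by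
    have hm : MeasurableSet {ω | ∀ i, P t ω i ≠ 0} := hPmeas t (hms {y | ∀ i, y i ≠ 0})
    rw [measure_compl hm (measure_ne_top μ _), measure_univ]
  have h6 : {ω | ∀ i, P t ω i ≠ 0}ᶜ = ⋃ i : Fin m, {ω | P t ω i = 0} := by
    ext ω
    simp only [Set.mem_compl_iff, Set.mem_setOf_eq, not_forall, not_not, Set.mem_iUnion]
  have h7 : μ ({ω | ∀ i, P t ω i ≠ 0}ᶜ)
      ≤ ∑ i : Fin m, μ {ω | P t ω i = 0} := by
    rw [h6]
    exact (measure_iUnion_le _).trans_eq (tsum_fintype _)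
  have h8 : ∑ i : Fin m, μ {ω | P t ω i = 0}
      = ENNReal.ofReal (∑ i : Fin m, (1 - ∑ F ∈ Faces.filter (fun F => F i ≠ 0), w F) ^ t) := by
    rw [ENNReal.ofReal_sum_of_nonneg]
    · exact Finset.sum_congr rfl fun i _ => hPi0 i
    · intro i _
      apply pow_nonneg
      have := hwi i
      rw [← this]
      exact Finset.sum_nonneg fun x _ => hw0 x
  calc 1 - (Fintype.card (Chamber m Faces) : ℝ≥0∞) * μ {ω | X t ω = C.1}
      ≤ 1 - μ {ω | ∀ i, P t ω i ≠ 0} := h4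
    _ = μ ({ω | ∀ i, P t ω i ≠ 0}ᶜ) := h5
    _ ≤ ∑ i : Fin m, μ {ω | P t ω i = 0} := h7
    _ = _ := h8
end
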